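/- Let D be a digraph with n ≥ 2 vertices and a ≥ nβ arcs, where β = max(1-α, α·d⁺_max) and d⁺_max is the maximum outdegree. Then ‖D_α‖_* ≤ a/n + √((n-1)[(1-α)² a + α² Σ_{i=1}^n (d_i⁺)² − a²/n²]). -/

import Mathlib

open Matrix Real

/-- Adjacency matrix (over ℝ) of a digraph given by an arc relation on `Fin n`. -/
def adjMat {n : ℕ} (R : Fin n → Fin n → Prop) [DecidableRel R] :
    Matrix (Fin n) (Fin n) ℝ :=
  Matrix.of fun i j => if R i j then 1 else 0

/-- Outdegree of a vertex. -/
def outdeg {n : ℕ} (R : Fin n → Fin n → Prop) [DecidableRel R] (i : Fin n) : ℕ :=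
  (Finset.univ.filter fun j => R i j).card

/-- Indegree of a vertex. -/
def indeg {n : ℕ} (R : Fin n → Fin n → Prop) [DecidableRel R] (j : Fin n) : ℕ :=
  (Finset.univ.filter fun i => R i j).card

/-- The `A_α` matrix of a digraph: `α Δ⁺ + (1-α) A`. -/
noncomputable def Amat {n : ℕ} (α : ℝ) (R : Fin n → Fin n → Prop) [DecidableRel R] :
    Matrix (Fin n) (Fin n) ℝ :=
  α • Matrix.diagonal (fun i => (outdeg R i : ℝ)) + (1 - α) • adjMat R

/-- The singular values of a real square matrix `M`: the nonnegative square roots of the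
eigenvalues of `M Mᵀ` (`Mᴴ = Mᵀ` over ℝ). -/
noncomputable def singVals {m : Type*} [Fintype m] [DecidableEq m]
    (M : Matrix m m ℝ) (i : m) : ℝ :=
  Real.sqrt ((Matrix.isHermitian_mul_conjTranspose_self M).eigenvalues i)

/-- Trace norm: sum of the singular values. -/
noncomputable def traceNorm {m : Type*} [Fintype m] [DecidableEq m]
    (M : Matrix m m ℝ) : ℝ :=
  ∑ i, singVals M i

/-- Spectral norm: the largest singular value. -/
noncomputable def specNorm {m : Type*} [Fintype m] [DecidableEq m]
    (M : Matrix m m ℝ) : ℝ :=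
  ⨆ i, singVals M i


section helpers

lemma trace_eq_sum_eig {m : Type*} [Fintype m] [DecidableEq m]
    (A : Matrix m m ℝ) (hA : A.IsHermitian) : A.trace = ∑ i, hA.eigenvalues i := by
  conv_lhs => rw [hA.spectral_theorem, Unitary.conjStarAlgAut_apply]
  rw [Matrix.trace_mul_comm, ← mul_assoc]
  rw [(Matrix.mem_unitaryGroup_iff'.mp (hA.eigenvectorUnitary).2)]
  simp [Matrix.trace_diagonal, RCLike.ofReal_real_eq_id]

lemma exists_eig_ge {m : Type*} [Fintype m] [DecidableEq m] [Nonempty m]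
    (A : Matrix m m ℝ) (hA : A.IsHermitian) (v : m → ℝ) :
    ∃ i, v ⬝ᵥ (A *ᵥ v) ≤ hA.eigenvalues i * (v ⬝ᵥ v) := by
  classical
  set U : Matrix m m ℝ := (hA.eigenvectorUnitary : Matrix m m ℝ) with hU
  have hU1 : U * star U = 1 := Matrix.mem_unitaryGroup_iff.mp (hA.eigenvectorUnitary).2
  set w : m → ℝ := star U *ᵥ v with hw
  have hsU : star U = Uᵀ := by
    ext i j; simp [Matrix.conjTranspose_apply]
  have hq : v ⬝ᵥ (A *ᵥ v) = ∑ i, hA.eigenvalues i * (w i)^2 := by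
    conv_lhs => rw [hA.spectral_theorem, Unitary.conjStarAlgAut_apply]
    rw [← Matrix.mulVec_mulVec, ← Matrix.mulVec_mulVec]
    rw [Matrix.dotProduct_mulVec, ← Matrix.mulVec_transpose, ← hsU, ← hw]
    simp [Matrix.mulVec_diagonal, dotProduct, RCLike.ofReal_real_eq_id]
    ring_nf
    exact Finset.sum_congr rfl fun i _ => by ring
  have hn : v ⬝ᵥ v = ∑ i, (w i)^2 := by
    have : w ⬝ᵥ w = v ⬝ᵥ v := by
      rw [hw, Matrix.dotProduct_mulVec, ← Matrix.mulVec_transpose, hsU, Matrix.transpose_transpose,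
        Matrix.mulVec_mulVec, ← hsU, hU1, Matrix.one_mulVec]
    rw [← this]; simp [dotProduct, pow_two]
  obtain ⟨i₀, -, hi₀⟩ := Finset.exists_max_image (Finset.univ : Finset m) hA.eigenvalues
    ⟨Classical.arbitrary m, Finset.mem_univ _⟩
  refine ⟨i₀, ?_⟩
  rw [hq, hn, Finset.mul_sum]
  exact Finset.sum_le_sum fun i _ =>
    mul_le_mul_of_nonneg_right (hi₀ i (Finset.mem_univ i)) (sq_nonneg _)

lemma key_ineq (n S c x T Q : ℝ) (hn : 2 ≤ n) (hc : 0 ≤ c) (hcx : c ≤ x)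
    (hS : S ≤ n * c^2) (hT0 : 0 ≤ T) (hQ0 : 0 ≤ Q)
    (hT2 : T^2 ≤ (n-1)*(S - x^2)) (hQ2 : Q^2 = (n-1)*(S - c^2)) :
    x + T ≤ c + Q := by
  have hn1 : (1:ℝ) ≤ n - 1 := by linarith
  have hx0 : 0 ≤ x := hc.trans hcx
  have hc2x2 : c^2 ≤ x^2 := by nlinarith
  have hx2 : x^2 ≤ S := by nlinarith [sq_nonneg T]
  have hQc : Q ≤ (n-1)*c := by
    have h1 : Q^2 ≤ ((n-1)*c)^2 := by nlinarith
    exact (pow_le_pow_iff_left₀ hQ0 (mul_nonneg (by linarith) hc) two_ne_zero).mp h1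
  have hTx : T ≤ (n-1)*x := by
    have hSx : S - x^2 ≤ (n-1)*x^2 := by
      nlinarith [mul_le_mul_of_nonneg_left hc2x2 (show (0:ℝ) ≤ n by linarith)]
    have h1 : T^2 ≤ ((n-1)*x)^2 := by
      nlinarith [mul_le_mul_of_nonneg_left hSx (show (0:ℝ) ≤ n-1 by linarith)]
    exact (pow_le_pow_iff_left₀ hT0 (mul_nonneg (by linarith) hx0) two_ne_zero).mp h1
  have hQT : T ≤ Q := by
    have h1 : T^2 ≤ Q^2 := by nlinarith
    exact (pow_le_pow_iff_left₀ hT0 hQ0 two_ne_zero).mp h1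
  rcases le_or_gt (x + c) 0 with h | h
  · have hx0' : x = 0 := le_antisymm (by linarith) hx0
    subst hx0'; linarith
  · have hpos : 0 < (n-1)*(x+c) := mul_pos (by linarith) h
    have hkey : (n-1)*(x^2 - c^2) ≤ (Q - T) * ((n-1)*(x+c)) := by
      have h2 : (Q - T) * (Q + T) ≤ (Q - T) * ((n-1)*(x+c)) :=
        mul_le_mul_of_nonneg_left (by linarith) (by linarith)
      nlinarith
    by_contra hcon
    push_neg at hcon
    have h3 : Q - T < x - c := by linarith
    have h4 := mul_lt_mul_of_pos_right h3 hpos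
    have h5 : (x - c) * ((n-1)*(x+c)) = (n-1)*(x^2-c^2) := by ring
    linarith

variable {n : ℕ} (R : Fin n → Fin n → Prop) [DecidableRel R]

lemma amat_apply (α : ℝ) (i j : Fin n) :
    Amat α R i j = α * (if i = j then (outdeg R i : ℝ) else 0)
      + (1-α) * (if R i j then 1 else 0) := by
  simp [Amat, adjMat, Matrix.diagonal, Matrix.of_apply]

lemma amat_sq (α : ℝ) (hirr : ∀ i, ¬ R i i) (i j : Fin n) :
    Amat α R i j * Amat α R i j =
      (if i = j then α^2 * (outdeg R i : ℝ)^2 else 0)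
      + (if R i j then (1-α)^2 else 0) := by
  rw [amat_apply]
  by_cases h : i = j
  · subst h
    simp [hirr i]; ring
  · simp [h]
    by_cases h2 : R i j <;> simp [h2] <;> ring

lemma amat_rowsum (α : ℝ) (i : Fin n) :
    ∑ j, Amat α R i j = (outdeg R i : ℝ) := by
  simp only [amat_apply]
  rw [Finset.sum_add_distrib, ← Finset.mul_sum, ← Finset.mul_sum]
  rw [Finset.sum_ite_eq Finset.univ i (fun _ => (outdeg R i : ℝ))]
  simp [Finset.sum_ite, outdeg]
  ring

end helpers

/-- Koolen–Moulton-type upper bound: if `a ≥ nβ` with `β = max(1-α, α d⁺_max)`, then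
`‖D_α‖_* ≤ a/n + √((n-1)[(1-α)² a + α² Σ(d_i⁺)² − a²/n²])`. -/
theorem stmt_17 (n : ℕ) (hn : 2 ≤ n) (R : Fin n → Fin n → Prop) [DecidableRel R]
    (hirr : ∀ i, ¬ R i i) (α : ℝ) (hα0 : 0 ≤ α) (hα1 : α < 1)
    (a : ℕ) (ha : a = ∑ i, outdeg R i)
    (β : ℝ) (hβ : β = max (1 - α) (α * ((Finset.univ.sup (outdeg R) : ℕ) : ℝ)))
    (haβ : (n : ℝ) * β ≤ a) :
    traceNorm (Amat α R) ≤
      (a : ℝ) / n + Real.sqrt ((n - 1) *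
        ((1 - α) ^ 2 * a + α ^ 2 * (∑ i, ((outdeg R i : ℝ)) ^ 2) -
          (a : ℝ) ^ 2 / (n : ℝ) ^ 2)) := by
    classical
  have hn0 : (0:ℝ) < n := by positivity
  have hn1 : (1:ℝ) ≤ n := by exact_mod_cast Nat.one_le_of_lt hn
  set M := Amat α R with hM
  set hH := Matrix.isHermitian_mul_conjTranspose_self M with hHdef
  set ev : Fin n → ℝ := hH.eigenvalues with hev
  have hev0 : ∀ i, 0 ≤ ev i := fun i =>
    Matrix.eigenvalues_self_mul_conjTranspose_nonneg M i
  set S : ℝ := (1 - α) ^ 2 * a + α ^ 2 * (∑ i, ((outdeg R i : ℝ)) ^ 2) with hSdef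
  -- sum of eigenvalues equals S
  have htr : (M * Mᴴ).trace = ∑ i, ∑ j, M i j * M i j := by
    simp [Matrix.trace, Matrix.diag, Matrix.mul_apply, Matrix.conjTranspose_apply]
  have hsum_ev : ∑ i, ev i = S := by
    rw [← trace_eq_sum_eig _ hH, htr]
    have : ∀ i : Fin n, ∑ j, M i j * M i j
        = α^2 * (outdeg R i : ℝ)^2 + (1-α)^2 * (outdeg R i : ℝ) := by
      intro i
      simp only [hM, amat_sq R α hirr]
      rw [Finset.sum_add_distrib]
      rw [Finset.sum_ite_eq Finset.univ i (fun _ => α^2 * (outdeg R i : ℝ)^2)]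
      simp [Finset.sum_ite, outdeg]
      ring
    rw [Finset.sum_congr rfl fun i _ => this i, Finset.sum_add_distrib, hSdef, ha]
    rw [← Finset.mul_sum, ← Finset.mul_sum]
    push_cast
    ring
  -- Rayleigh with all-ones vector
  have hne : Nonempty (Fin n) := ⟨⟨0, by omega⟩⟩
  set v : Fin n → ℝ := fun _ => 1 with hv
  have hvv : v ⬝ᵥ v = (n:ℝ) := by simp [dotProduct, hv]
  have hq : v ⬝ᵥ ((M * Mᴴ) *ᵥ v) = ∑ k, (∑ i, M i k)^2 := by
    have hMH : Mᴴ = Mᵀ := by ext i j; simp [Matrix.conjTranspose_apply]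
    rw [← Matrix.mulVec_mulVec, Matrix.dotProduct_mulVec, ← Matrix.mulVec_transpose, hMH]
    simp [dotProduct, Matrix.mulVec, Matrix.transpose_apply, hv, pow_two,
      dotProduct]
  have hcolsum : ∑ k, ∑ i, M i k = (a:ℝ) := by
    rw [Finset.sum_comm]
    rw [Finset.sum_congr rfl fun i _ => amat_rowsum R α i, ha]
    push_cast; rfl
  have hq_lb : (a:ℝ)^2 / n ≤ v ⬝ᵥ ((M * Mᴴ) *ᵥ v) := by
    rw [hq, div_le_iff₀ hn0]
    have := sq_sum_le_card_mul_sum_sq (s := (Finset.univ : Finset (Fin n)))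
      (f := fun k => ∑ i, M i k)
    rw [hcolsum] at this
    simpa [mul_comm] using this
  obtain ⟨i₀, hi₀⟩ := exists_eig_ge (M * Mᴴ) hH v
  rw [hvv] at hi₀
  have hev_lb : (a:ℝ)^2 / (n:ℝ)^2 ≤ ev i₀ := by
    have h1 : (a:ℝ)^2 / n ≤ ev i₀ * n := le_trans hq_lb hi₀
    rw [div_le_iff₀ hn0] at h1
    rw [div_le_iff₀ (by positivity)]
    calc (a:ℝ)^2 ≤ ev i₀ * n * n := h1
    _ = ev i₀ * (n:ℝ)^2 := by ring
  -- singular values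
  set σ : Fin n → ℝ := singVals M with hσ
  have hσ0 : ∀ i, 0 ≤ σ i := fun i => Real.sqrt_nonneg _
  have hσ2 : ∀ i, (σ i)^2 = ev i := fun i => Real.sq_sqrt (hev0 i)
  set c : ℝ := (a:ℝ) / n with hc
  have hc0 : 0 ≤ c := by positivity
  have hx : c ≤ σ i₀ := by
    have h1 : c = Real.sqrt (c^2) := (Real.sqrt_sq hc0).symm
    have h2 : σ i₀ = Real.sqrt (ev i₀) := rfl
    rw [h1, h2]
    apply Real.sqrt_le_sqrt
    rw [hc, div_pow]
    exact hev_lb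
  set x : ℝ := σ i₀ with hxdef
  set T : ℝ := ∑ i ∈ Finset.univ.erase i₀, σ i with hT
  have hT0 : 0 ≤ T := Finset.sum_nonneg fun i _ => hσ0 i
  have htrace : traceNorm M = x + T := by
    rw [traceNorm, hT, hxdef, Finset.add_sum_erase _ σ (Finset.mem_univ i₀)]
  have hcard : ((Finset.univ.erase i₀).card : ℝ) = (n:ℝ) - 1 := by
    rw [Finset.card_erase_of_mem (Finset.mem_univ i₀), Finset.card_univ, Fintype.card_fin,
      Nat.cast_sub (by omega : 1 ≤ n)]
    simp
  have hT2 : T^2 ≤ ((n:ℝ)-1)*(S - x^2) := by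
    have h1 := sq_sum_le_card_mul_sum_sq (s := Finset.univ.erase i₀) (f := σ)
    have h2 : ∑ i ∈ Finset.univ.erase i₀, (σ i)^2 = S - x^2 := by
      rw [Finset.sum_congr rfl fun i _ => hσ2 i]
      rw [hxdef, hσ2 i₀, ← hsum_ev]
      rw [← Finset.add_sum_erase _ ev (Finset.mem_univ i₀)]
      ring
    rw [h2] at h1
    calc T^2 ≤ ((Finset.univ.erase i₀).card : ℝ) * (S - x^2) := by exact_mod_cast h1
    _ = ((n:ℝ)-1)*(S - x^2) := by rw [hcard]
  -- S ≤ n c²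
  have hβ1 : 1 - α ≤ β := hβ ▸ le_max_left _ _
  have hβ2 : ∀ i, α * (outdeg R i : ℝ) ≤ β := by
    intro i
    refine le_trans ?_ (hβ ▸ le_max_right _ _)
    have : (outdeg R i : ℝ) ≤ ((Finset.univ.sup (outdeg R) : ℕ) : ℝ) := by
      exact_mod_cast Finset.le_sup (Finset.mem_univ i)
    exact mul_le_mul_of_nonneg_left this hα0
  have hβc : β ≤ c := by
    rw [hc, le_div_iff₀ hn0]
    linarith [haβ]
  have hβ0 : 0 ≤ β := le_trans (by linarith) hβ1
  have hSle : S ≤ (n:ℝ) * c^2 := by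
    have h0 : (0:ℝ) ≤ 1 - α := by linarith
    have h1 : (1-α)^2 * a ≤ β * ((1-α) * a) := by
      have h1' : (1-α)*(1-α) ≤ β*(1-α) := mul_le_mul_of_nonneg_right hβ1 h0
      have h1'' := mul_le_mul_of_nonneg_right h1' (show (0:ℝ) ≤ (a:ℝ) from Nat.cast_nonneg a)
      calc (1-α)^2*(a:ℝ) = (1-α)*(1-α)*a := by ring
      _ ≤ β*(1-α)*a := h1''
      _ = β*((1-α)*a) := by ring
    have h2 : α ^ 2 * (∑ i, ((outdeg R i : ℝ)) ^ 2) ≤ β * (α * a) := by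
      rw [Finset.mul_sum, ha]
      push_cast
      rw [Finset.mul_sum, Finset.mul_sum]
      refine Finset.sum_le_sum fun i _ => ?_
      have hd0 : (0:ℝ) ≤ α * (outdeg R i : ℝ) := mul_nonneg hα0 (Nat.cast_nonneg _)
      calc α^2 * (outdeg R i : ℝ)^2 = (α * (outdeg R i : ℝ)) * (α * (outdeg R i : ℝ)) := by ring
      _ ≤ β * (α * (outdeg R i : ℝ)) := mul_le_mul_of_nonneg_right (hβ2 i) hd0
    have h3 : β * a ≤ c * a := mul_le_mul_of_nonneg_right hβc (Nat.cast_nonneg _)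
    have h4 : (n:ℝ) * c^2 = c * a := by
      rw [hc]; field_simp
    calc S = (1-α)^2*a + α^2 * (∑ i, ((outdeg R i : ℝ)) ^ 2) := hSdef
    _ ≤ β * ((1-α)*a) + β * (α * a) := add_le_add h1 h2
    _ = β * a := by ring
    _ ≤ c * a := h3
    _ = (n:ℝ) * c^2 := h4.symm
  -- conclude
  set Q : ℝ := Real.sqrt (((n:ℝ)-1)*(S - c^2)) with hQ
  have hQ0 : 0 ≤ Q := Real.sqrt_nonneg _
  have hScnonneg : 0 ≤ S - c^2 := by
    have hcx2 : c^2 ≤ x^2 := pow_le_pow_left₀ hc0 hx 2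
    have h5 : 0 ≤ ((n:ℝ)-1)*(S - x^2) := le_trans (sq_nonneg T) hT2
    have h6 : (0:ℝ) < (n:ℝ)-1 := by
      have : (2:ℝ) ≤ n := by exact_mod_cast hn
      linarith
    rcases lt_or_ge S (x^2) with h7 | h7
    · exact absurd h5 (not_le.mpr (mul_neg_of_pos_of_neg h6 (by linarith)))
    · linarith
  have hQ2 : Q^2 = ((n:ℝ)-1)*(S - c^2) := Real.sq_sqrt (mul_nonneg (by
    have : (2:ℝ) ≤ n := by exact_mod_cast hn
    linarith) hScnonneg)
  have hfin := key_ineq (n:ℝ) S c x T Q (by exact_mod_cast hn) hc0 hx hSle hT0 hQ0 hT2 hQ2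
  rw [htrace]
  have hgoal : (a:ℝ)/n + Real.sqrt (((n:ℝ) - 1) *
      ((1 - α) ^ 2 * a + α ^ 2 * (∑ i, ((outdeg R i : ℝ)) ^ 2) -
        (a : ℝ) ^ 2 / (n : ℝ) ^ 2)) = c + Q := by
    rw [hc, hQ, hSdef]
    congr 2
    rw [div_pow]
  rw [hgoal]
  exact hfin
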